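/- Let B be a collection of r-element subsets of [n] and let Q(B) be the convex hull of the indicator vectors e_B for B in B. Then B is the collection of bases of a matroid if and only if every edge of Q(B) is a parallel translate of e_i - e_j for some i, j in [n]. -/

import Mathlib

open Finset
open scoped Pointwise

/-- The indicator vector `e_B ∈ ℝⁿ` of a subset `B ⊆ [n]`. -/
def indVec (n : ℕ) (B : Finset (Fin n)) : Fin n → ℝ := fun i => if i ∈ B then 1 else 0

/-- A collection of subsets of `[n]` is the collection of bases of a matroid
(possibly the empty matroid) iff it satisfies the basis exchange axiom. -/
def IsBases {n : ℕ} (𝓑 : Finset (Finset (Fin n))) : Prop :=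
  ∀ B₁ ∈ 𝓑, ∀ B₂ ∈ 𝓑, ∀ b₁ ∈ B₁ \ B₂, ∃ b₂ ∈ B₂ \ B₁, insert b₂ (B₁.erase b₁) ∈ 𝓑

/-- The matroid (basis) polytope: convex hull of indicator vectors of the bases. -/
def polytope {n : ℕ} (𝓑 : Finset (Finset (Fin n))) : Set (Fin n → ℝ) :=
  convexHull ℝ (indVec n '' ↑𝓑)

/-- The (affine) dimension of a subset of ℝⁿ. -/
noncomputable def polyDim {n : ℕ} (F : Set (Fin n → ℝ)) : ℕ :=
  Module.finrank ℝ (affineSpan ℝ F).direction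

/-- An edge of a polytope `P` is a one-dimensional (exposed) face. -/
def IsEdge {n : ℕ} (P F : Set (Fin n → ℝ)) : Prop :=
  IsExposed ℝ P F ∧ polyDim F = 1

open scoped Classical

lemma indVec_apply {n : ℕ} (B : Finset (Fin n)) (i : Fin n) :
    indVec n B i = if i ∈ B then 1 else 0 := rfl

lemma indVec_inj {n : ℕ} {B C : Finset (Fin n)} (h : indVec n B = indVec n C) : B = C := by
  ext i
  have := congrFun h i
  simp only [indVec_apply] at this
  by_cases hB : i ∈ B <;> by_cases hC : i ∈ C <;> simp_all

/-- `e_B` as a sum of coordinate vectors. -/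
lemma indVec_eq_sum {n : ℕ} (B : Finset (Fin n)) :
    indVec n B = ∑ i ∈ B, indVec n {i} := by
  funext j
  rw [Finset.sum_apply]
  simp only [indVec_apply, Finset.mem_singleton]
  rw [show (∑ i ∈ B, if j = i then (1:ℝ) else 0) = if j ∈ B then 1 else 0 from
    Finset.sum_ite_eq B j (fun _ => (1:ℝ))]

/-- the linear functional `x ↦ ∑ i, w i * x i` as a continuous linear map. -/
noncomputable def lw {n : ℕ} (w : Fin n → ℝ) : (Fin n → ℝ) →L[ℝ] ℝ :=
  LinearMap.toContinuousLinearMap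
    { toFun := fun x => ∑ i, w i * x i
      map_add' := by intro x y; simp [mul_add, Finset.sum_add_distrib]
      map_smul' := by intro c x; simp [Finset.mul_sum]; congr 1; funext i; ring }

lemma lw_indVec {n : ℕ} (w : Fin n → ℝ) (B : Finset (Fin n)) :
    lw w (indVec n B) = ∑ i ∈ B, w i := by
  show (∑ i, w i * indVec n B i) = _
  simp only [indVec_apply, mul_ite, mul_one, mul_zero]
  rw [Finset.sum_ite_mem, Finset.univ_inter]

/-- the set of maximizers of `φ` on `𝒯`. -/
noncomputable def amax {n : ℕ} (φ : Finset (Fin n) → ℝ) (𝒯 : Finset (Finset (Fin n))) :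
    Finset (Finset (Fin n)) :=
  𝒯.filter fun B => ∀ C ∈ 𝒯, φ C ≤ φ B

lemma mem_amax {n : ℕ} {φ : Finset (Fin n) → ℝ} {𝒯 : Finset (Finset (Fin n))}
    {B : Finset (Fin n)} : B ∈ amax φ 𝒯 ↔ B ∈ 𝒯 ∧ ∀ C ∈ 𝒯, φ C ≤ φ B := by
  simp [amax]

lemma amax_subset {n : ℕ} (φ : Finset (Fin n) → ℝ) (𝒯 : Finset (Finset (Fin n))) :
    amax φ 𝒯 ⊆ 𝒯 := Finset.filter_subset _ _

lemma amax_nonempty {n : ℕ} (φ : Finset (Fin n) → ℝ) {𝒯 : Finset (Finset (Fin n))}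
    (h : 𝒯.Nonempty) : (amax φ 𝒯).Nonempty := by
  obtain ⟨B, hB, hmax⟩ := Finset.exists_max_image 𝒯 φ h
  exact ⟨B, mem_amax.2 ⟨hB, hmax⟩⟩

lemma amax_const_eq {n : ℕ} {φ : Finset (Fin n) → ℝ} {𝒯 : Finset (Finset (Fin n))}
    {B : Finset (Fin n)} (hB : B ∈ amax φ 𝒯) {C : Finset (Fin n)} (hC : C ∈ amax φ 𝒯) :
    φ B = φ C := by
  rw [mem_amax] at hB hC
  exact le_antisymm (hC.2 B hB.1) (hB.2 C hC.1)

lemma amax_combine (𝒯 : Finset (Finset (Fin n))) (h𝒯 : 𝒯.Nonempty)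
    (φ ψ : Finset (Fin n) → ℝ) :
    ∃ N : ℝ, 0 < N ∧ amax (fun B => N * φ B + ψ B) 𝒯 = amax ψ (amax φ 𝒯) := by
  obtain ⟨B₀, hB₀, hmax₀⟩ := Finset.exists_max_image 𝒯 φ h𝒯
  set μ := φ B₀ with hμ
  have hB₀m : B₀ ∈ amax φ 𝒯 := mem_amax.2 ⟨hB₀, hmax₀⟩
  have hφV : ∀ B ∈ amax φ 𝒯, φ B = μ := fun B hB =>
    le_antisymm (hmax₀ B (mem_amax.1 hB).1) ((mem_amax.1 hB).2 B₀ hB₀)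
  -- bound for ψ
  obtain ⟨G, hG⟩ : ∃ G : ℝ, ∀ B ∈ 𝒯, |ψ B| ≤ G := by
    obtain ⟨D, hD, hDmax⟩ := Finset.exists_max_image 𝒯 (fun B => |ψ B|) h𝒯
    exact ⟨|ψ D|, hDmax⟩
  have hG0 : 0 ≤ G := le_trans (abs_nonneg _) (hG B₀ hB₀)
  by_cases hbad : (𝒯.filter (fun C => C ∉ amax φ 𝒯)).Nonempty
  · -- positive gap
    obtain ⟨C₀, hC₀, hC₀min⟩ := Finset.exists_min_image _ (fun C => μ - φ C) hbad
    have hgap : ∀ C ∈ 𝒯, C ∉ amax φ 𝒯 → μ - φ C₀ ≤ μ - φ C := fun C hC hC' =>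
      hC₀min C (Finset.mem_filter.2 ⟨hC, hC'⟩)
    set γ := μ - φ C₀ with hγdef
    have hγpos : 0 < γ := by
      rw [Finset.mem_filter] at hC₀
      have : ¬ ∀ C ∈ 𝒯, φ C ≤ φ C₀ := by
        intro hall; exact hC₀.2 (mem_amax.2 ⟨hC₀.1, hall⟩)
      push_neg at this
      obtain ⟨C, hC, hlt⟩ := this
      have := hmax₀ C hC
      simp only [hγdef]; linarith
    refine ⟨(2 * G + 1) / γ, by positivity, ?_⟩
    set N := (2 * G + 1) / γ with hNdef
    have hNγ : N * γ = 2 * G + 1 := by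
      rw [hNdef]; exact div_mul_cancel₀ _ (ne_of_gt hγpos)
    have hNpos : 0 < N := by positivity
    ext B
    constructor
    · intro hBmem0
      obtain ⟨hB, hall⟩ := mem_amax.1 hBmem0
      -- first: B ∈ amax φ 𝒯
      have hBmem : B ∈ amax φ 𝒯 := by
        by_contra hBn
        have h1 : N * φ B₀ + ψ B₀ ≤ N * φ B + ψ B := hall B₀ hB₀
        have h2 : μ - φ B ≥ γ := hgap B hB hBn
        have h3 : |ψ B| ≤ G := hG B hB
        have h4 : |ψ B₀| ≤ G := hG B₀ hB₀
        rw [abs_le] at h3 h4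
        nlinarith
      refine mem_amax.2 ⟨hBmem, fun C hC => ?_⟩
      have h1 : N * φ C + ψ C ≤ N * φ B + ψ B := hall C (mem_amax.1 hC).1
      rw [hφV C hC, hφV B hBmem] at h1
      linarith
    · intro hBmem0
      obtain ⟨hB, hall⟩ := mem_amax.1 hBmem0
      have hBT : B ∈ 𝒯 := (mem_amax.1 hB).1
      refine mem_amax.2 ⟨hBT, fun C hC => ?_⟩
      by_cases hCm : C ∈ amax φ 𝒯
      · have := hall C hCm
        rw [hφV C hCm, hφV B hB]
        linarith
      · have h2 : μ - φ C ≥ γ := hgap C hC hCm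
        have h3 : |ψ C| ≤ G := hG C hC
        have h4 : |ψ B| ≤ G := hG B hBT
        rw [abs_le] at h3 h4
        rw [hφV B hB]
        nlinarith
  · -- everything maximizes φ
    have hall : ∀ B ∈ 𝒯, B ∈ amax φ 𝒯 := by
      intro B hB
      by_contra hBn
      exact hbad ⟨B, Finset.mem_filter.2 ⟨hB, hBn⟩⟩
    have hTeq : amax φ 𝒯 = 𝒯 :=
      le_antisymm (Finset.filter_subset _ _) (fun B hB => hall B hB)
    refine ⟨1, one_pos, ?_⟩
    rw [hTeq]
    ext B
    constructor
    · intro hBmem0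
      obtain ⟨hB, h⟩ := mem_amax.1 hBmem0
      refine mem_amax.2 ⟨hB, fun C hC => ?_⟩
      have := h C hC
      have e1 : φ C = μ := hφV C (hall C hC)
      have e2 : φ B = μ := hφV B (hall B hB)
      rw [e1, e2] at this; linarith
    · intro hBmem0
      obtain ⟨hB, h⟩ := mem_amax.1 hBmem0
      refine mem_amax.2 ⟨hB, fun C hC => ?_⟩
      have := h C hC
      have e1 : φ C = μ := hφV C (hall C hC)
      have e2 : φ B = μ := hφV B (hall B hB)
      rw [e1, e2]; linarith

lemma face_eq {n : ℕ} (𝓑 : Finset (Finset (Fin n))) (h𝓑 : 𝓑.Nonempty)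
    (l : (Fin n → ℝ) →L[ℝ] ℝ) :
    {x ∈ polytope 𝓑 | ∀ y ∈ polytope 𝓑, l y ≤ l x}
      = convexHull ℝ (indVec n '' ↑(amax (fun B => l (indVec n B)) 𝓑)) := by
  set φ : Finset (Fin n) → ℝ := fun B => l (indVec n B) with hφ
  obtain ⟨B₀, hB₀, hmax₀⟩ := Finset.exists_max_image 𝓑 φ h𝓑
  have hB₀m : B₀ ∈ amax φ 𝓑 := mem_amax.2 ⟨hB₀, hmax₀⟩
  set μ := φ B₀ with hμ
  set T : Finset (Fin n → ℝ) := 𝓑.image (indVec n) with hT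
  have hTcoe : (↑T : Set (Fin n → ℝ)) = indVec n '' ↑𝓑 := Finset.coe_image
  have hPT : polytope 𝓑 = convexHull ℝ (↑T : Set (Fin n → ℝ)) := by
    rw [hTcoe]; rfl
  -- all points of the polytope have l-value at most μ
  have hPle : ∀ y ∈ polytope 𝓑, l y ≤ μ := by
    intro y hy
    have hconv : Convex ℝ {x : Fin n → ℝ | l x ≤ μ} :=
      convex_halfSpace_le ⟨fun a b => map_add l a b, fun c a => map_smul l c a⟩ μ
    have hsub : indVec n '' ↑𝓑 ⊆ {x | l x ≤ μ} := by
      rintro _ ⟨B, hB, rfl⟩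
      exact hmax₀ B hB
    exact convexHull_min hsub hconv hy
  have hμP : indVec n B₀ ∈ polytope 𝓑 :=
    subset_convexHull ℝ _ ⟨B₀, hB₀, rfl⟩
  -- the face as an intersection
  have hface : {x ∈ polytope 𝓑 | ∀ y ∈ polytope 𝓑, l y ≤ l x}
      = polytope 𝓑 ∩ {x | μ ≤ l x} := by
    ext x
    constructor
    · rintro ⟨hx, hall⟩
      exact ⟨hx, hall _ hμP⟩
    · rintro ⟨hx, hge⟩
      exact ⟨hx, fun y hy => le_trans (hPle y hy) hge⟩
  rw [hface]
  apply Set.Subset.antisymm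
  · -- hard inclusion
    rintro x ⟨hx, hge⟩
    have hxμ : l x = μ := le_antisymm (hPle x hx) hge
    rw [hPT, Finset.convexHull_eq] at hx
    obtain ⟨wgt, hw0, hw1, hcm⟩ := hx
    -- l x = ∑ wgt y * l y
    have hlx : l x = ∑ y ∈ T, wgt y * l y := by
      rw [← hcm, Finset.centerMass_eq_of_sum_1 _ _ hw1, map_sum]
      simp [map_smul, smul_eq_mul]
    have hyle : ∀ y ∈ T, l y ≤ μ := by
      intro y hy
      rw [hPT] at hPle
      exact hPle y (subset_convexHull ℝ _ hy)
    have hzero : ∀ y ∈ T, wgt y * (μ - l y) = 0 := by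
      have hsum : ∑ y ∈ T, wgt y * (μ - l y) = 0 := by
        have : ∑ y ∈ T, wgt y * (μ - l y) = μ * (∑ y ∈ T, wgt y) - ∑ y ∈ T, wgt y * l y := by
          rw [Finset.mul_sum, ← Finset.sum_sub_distrib]
          congr 1; funext y; ring
        rw [this, hw1, ← hlx, hxμ]; ring
      intro y hy
      exact (Finset.sum_eq_zero_iff_of_nonneg (fun y hy =>
        mul_nonneg (hw0 y hy) (by linarith [hyle y hy]))).1 hsum y hy
    -- x is a center of mass of the maximizers
    have hmemV : ∀ y ∈ T.filter (fun y => wgt y ≠ 0),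
        y ∈ indVec n '' ↑(amax φ 𝓑) := by
      intro y hy
      rw [Finset.mem_filter] at hy
      obtain ⟨hyT, hwne⟩ := hy
      have hlyμ : l y = μ := by
        have := hzero y hyT
        rcases mul_eq_zero.1 this with h | h
        · exact absurd h hwne
        · linarith
      obtain ⟨B, hB, rfl⟩ := Finset.mem_image.1 hyT
      refine ⟨B, ?_, rfl⟩
      rw [Finset.mem_coe, mem_amax]
      exact ⟨hB, fun C hC => by rw [hφ]; simp only; rw [hlyμ]; exact hmax₀ C hC⟩
    have hx' : x = (T.filter (fun y => wgt y ≠ 0)).centerMass wgt id := by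
      rw [Finset.centerMass_filter_ne_zero, hcm]
    rw [hx']
    exact Finset.centerMass_mem_convexHull _
      (fun y hy => hw0 y (Finset.mem_filter.1 hy).1)
      (by rw [Finset.sum_filter_ne_zero, hw1]; norm_num)
      hmemV
  · -- easy inclusion
    apply convexHull_min
    · rintro _ ⟨B, hB, rfl⟩
      rw [Finset.mem_coe, mem_amax] at hB
      constructor
      · exact subset_convexHull ℝ _ ⟨B, hB.1, rfl⟩
      · show μ ≤ φ B
        exact hB.2 B₀ hB₀
    · exact (convex_convexHull ℝ _).inter
        (convex_halfSpace_ge ⟨fun a b => map_add l a b, fun c a => map_smul l c a⟩ μ)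

/-- `l (e_B)` is the sum of the coordinate values. -/
lemma l_indVec {n : ℕ} (l : (Fin n → ℝ) →L[ℝ] ℝ) (B : Finset (Fin n)) :
    l (indVec n B) = ∑ i ∈ B, l (indVec n {i}) := by
  rw [indVec_eq_sum, map_sum]

/-- the single-swap difference vector. -/
lemma indVec_swap {n : ℕ} {B : Finset (Fin n)} {x y : Fin n} (hx : x ∈ B) (hy : y ∉ B) :
    indVec n (insert y (B.erase x)) - indVec n B = indVec n {y} - indVec n {x} := by
  funext j
  have hxy : y ≠ x := fun h => hy (h ▸ hx)
  simp only [Pi.sub_apply, indVec, Finset.mem_insert, Finset.mem_erase, Finset.mem_singleton]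
  by_cases h1 : j = y <;> by_cases h2 : j = x <;> by_cases h3 : j ∈ B <;>
    simp_all

lemma forward {n r : ℕ} (𝓑 : Finset (Finset (Fin n)))
    (hcard : ∀ B ∈ 𝓑, B.card = r) (hB : IsBases 𝓑) :
    ∀ F : Set (Fin n → ℝ), IsEdge (polytope 𝓑) F →
      ∃ i j : Fin n,
        (affineSpan ℝ F).direction = Submodule.span ℝ {indVec n {i} - indVec n {j}} := by
  intro F hF
  obtain ⟨hexp, hdim⟩ := hF
  -- F is nonempty
  have hFne : F.Nonempty := by
    by_contra hne
    rw [Set.not_nonempty_iff_eq_empty] at hne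
    rw [polyDim, hne, AffineSubspace.span_empty, AffineSubspace.direction_bot] at hdim
    simp at hdim
  obtain ⟨l, hl⟩ := hexp hFne
  -- 𝓑 is nonempty
  have h𝓑ne : 𝓑.Nonempty := by
    obtain ⟨x, hx⟩ := hFne
    rw [hl] at hx
    have hxP : x ∈ polytope 𝓑 := hx.1
    by_contra hc
    rw [Finset.not_nonempty_iff_eq_empty] at hc
    rw [polytope, hc] at hxP
    simp at hxP
  set φ : Finset (Fin n) → ℝ := fun B => l (indVec n B) with hφ
  have hlface := face_eq 𝓑 h𝓑ne l
  rw [hlface] at hl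
  set V := amax φ 𝓑 with hV
  -- direction of F
  have hdir : (affineSpan ℝ F).direction = vectorSpan ℝ (indVec n '' ↑V) := by
    rw [hl, affineSpan_convexHull, direction_affineSpan]
  rw [polyDim, hdir] at hdim
  -- V has two distinct elements
  have hVne : V.Nonempty := by
    by_contra hc
    rw [Finset.not_nonempty_iff_eq_empty] at hc
    rw [hc] at hl
    simp at hl
    exact absurd hl (Set.nonempty_iff_ne_empty.1 hFne)
  obtain ⟨C₀, hC₀⟩ := hVne
  have : ∃ C₁ ∈ V, C₁ ≠ C₀ := by
    by_contra hc
    push_neg at hc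
    have himg : indVec n '' ↑V = {indVec n C₀} := by
      apply Set.Subset.antisymm
      · rintro _ ⟨B, hB', rfl⟩
        rw [hc B hB']
        rfl
      · rintro _ rfl
        exact ⟨C₀, hC₀, rfl⟩
    rw [himg, vectorSpan_singleton] at hdim
    simp at hdim
  obtain ⟨C₁, hC₁, hne01⟩ := this
  -- maximality facts
  have hμ : ∀ B ∈ V, ∀ C ∈ V, φ B = φ C := by
    intro B hB' C hC'
    rw [mem_amax] at hB' hC'
    exact le_antisymm (hC'.2 B hB'.1) (hB'.2 C hC'.1)
  -- minimize g on the symmetric difference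
  set g : Fin n → ℝ := fun i => l (indVec n {i}) with hg
  have hcard0 : C₀.card = r := hcard C₀ (mem_amax.1 hC₀).1
  have hcard1 : C₁.card = r := hcard C₁ (mem_amax.1 hC₁).1
  have hsd : ((C₀ \ C₁) ∪ (C₁ \ C₀)).Nonempty := by
    rcases Finset.eq_empty_or_nonempty (C₀ \ C₁) with h | h
    · exfalso
      rw [Finset.sdiff_eq_empty_iff_subset] at h
      exact hne01 (Finset.eq_of_subset_of_card_le h (by rw [hcard0, hcard1]) ).symm
    · exact h.mono Finset.subset_union_left
  obtain ⟨xm, hxm, hxmin⟩ := Finset.exists_min_image _ g hsd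
  have key : ∀ D₀ ∈ V, ∀ D₁ ∈ V, D₁ \ D₀ ⊆ (C₀ \ C₁) ∪ (C₁ \ C₀) → xm ∈ D₀ \ D₁ →
      ∃ i j : Fin n,
        (affineSpan ℝ F).direction = Submodule.span ℝ {indVec n {i} - indVec n {j}} := by
    intro D₀ hD₀ D₁ hD₁ hsub hxmD
    obtain ⟨y, hy, hins⟩ := hB D₀ (mem_amax.1 hD₀).1 D₁ (mem_amax.1 hD₁).1 xm hxmD
    have hyD : y ∉ D₀ := (Finset.mem_sdiff.1 hy).2
    have hxD : xm ∈ D₀ := (Finset.mem_sdiff.1 hxmD).1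
    set B₃ := insert y (D₀.erase xm) with hB₃
    have hφB₃ : φ B₃ = φ D₀ - g xm + g y := by
      rw [hφ]
      simp only
      rw [l_indVec, l_indVec, hB₃,
        Finset.sum_insert (fun h => hyD (Finset.mem_of_mem_erase h)),
        Finset.sum_erase_eq_sub hxD]
      ring
    have hle : φ B₃ ≤ φ D₀ := by
      have h1 : φ B₃ ≤ φ C₀ := (mem_amax.1 hC₀).2 B₃ hins
      rw [hμ D₀ hD₀ C₀ hC₀]
      exact h1
    have hge : g xm ≤ g y := hxmin y (hsub hy)
    have hφeq : φ B₃ = φ D₀ := by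
      rw [hφB₃] at hle ⊢
      have : g y ≤ g xm := by linarith
      linarith [le_antisymm this hge]
    have hB₃V : B₃ ∈ V := by
      rw [mem_amax]
      refine ⟨hins, fun C hC => ?_⟩
      rw [hφeq, hμ D₀ hD₀ C₀ hC₀]
      exact (mem_amax.1 hC₀).2 C hC
    set v : Fin n → ℝ := indVec n {y} - indVec n {xm} with hv
    have hvmem : v ∈ vectorSpan ℝ (indVec n '' ↑V) := by
      have := vsub_mem_vectorSpan ℝ (Set.mem_image_of_mem (indVec n) (Finset.mem_coe.2 hB₃V))
        (Set.mem_image_of_mem (indVec n) (Finset.mem_coe.2 hD₀))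
      rwa [vsub_eq_sub, indVec_swap hxD hyD] at this
    have hyxm : y ≠ xm := fun h => hyD (h ▸ hxD)
    have hvne : v ≠ 0 := by
      intro h
      have := congrFun h y
      simp [hv, indVec, hyxm] at this
    refine ⟨y, xm, ?_⟩
    rw [hdir]
    refine (Submodule.eq_of_le_of_finrank_eq ?_ ?_).symm
    · exact Submodule.span_le.2 (Set.singleton_subset_iff.2 hvmem)
    · rw [finrank_span_singleton hvne, hdim]
  rcases Finset.mem_union.1 hxm with hx0 | hx1
  · exact key C₀ hC₀ C₁ hC₁ (Finset.subset_union_right) hx0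
  · exact key C₁ hC₁ C₀ hC₀ (Finset.subset_union_left) hx1

lemma int_pow3_zero : ∀ (n : ℕ) (z : Fin n → ℤ), (∀ i, |z i| ≤ 1) →
    (∑ i, z i * 3 ^ (i : ℕ)) = 0 → ∀ i, z i = 0 := by
  intro n
  induction n with
  | zero => intro z _ _ i; exact absurd i.2 (by omega)
  | succ m ih =>
    intro z hb hsum i
    rw [Fin.sum_univ_succ] at hsum
    have hrw : ∀ j : Fin m, z j.succ * 3 ^ ((j.succ : Fin (m+1)) : ℕ)
        = 3 * (z j.succ * 3 ^ (j : ℕ)) := by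
      intro j
      rw [Fin.val_succ, pow_succ]
      ring
    rw [Finset.sum_congr rfl (fun j _ => hrw j), ← Finset.mul_sum] at hsum
    simp only [Fin.val_zero, pow_zero, mul_one] at hsum
    set S := ∑ j : Fin m, z j.succ * 3 ^ (j : ℕ) with hS
    have hz0 : z 0 = 0 := by
      have hb0 := hb 0
      rw [abs_le] at hb0
      omega
    have hSz : S = 0 := by omega
    have hrest := ih (fun j => z j.succ) (fun j => hb j.succ) hSz
    rcases Fin.eq_zero_or_eq_succ i with h | ⟨j, rfl⟩
    · rw [h]; exact hz0
    · exact hrest j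

lemma pow3_int_inj {n : ℕ} {B C : Finset (Fin n)}
    (h : (∑ i ∈ B, (3:ℤ) ^ (i : ℕ)) = ∑ i ∈ C, (3:ℤ) ^ (i : ℕ)) : B = C := by
  classical
  set z : Fin n → ℤ := fun i => (if i ∈ B then 1 else 0) - (if i ∈ C then 1 else 0) with hz
  have hb : ∀ i, |z i| ≤ 1 := by
    intro i
    rw [hz]
    by_cases h1 : i ∈ B <;> by_cases h2 : i ∈ C <;> simp [h1, h2]
  have key : ∀ D : Finset (Fin n), ∑ i, (if i ∈ D then (1:ℤ) else 0) * 3 ^ (i:ℕ)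
      = ∑ i ∈ D, (3:ℤ) ^ (i : ℕ) := by
    intro D
    simp only [ite_mul, one_mul, zero_mul]
    rw [Finset.sum_ite_mem, Finset.univ_inter]
  have hsum : (∑ i, z i * 3 ^ (i : ℕ)) = 0 := by
    simp only [hz, sub_mul, Finset.sum_sub_distrib, key, h, sub_self]
  have hzz := int_pow3_zero n z hb hsum
  ext i
  have := hzz i
  rw [hz] at this
  by_cases h1 : i ∈ B <;> by_cases h2 : i ∈ C <;> simp_all

lemma pow3_real_inj {n : ℕ} {B C : Finset (Fin n)}
    (h : (∑ i ∈ B, (3:ℝ) ^ (i : ℕ)) = ∑ i ∈ C, (3:ℝ) ^ (i : ℕ)) : B = C := by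
  apply pow3_int_inj (n := n)
  have : ((∑ i ∈ B, (3:ℤ) ^ (i : ℕ) : ℤ) : ℝ) = ((∑ i ∈ C, (3:ℤ) ^ (i:ℕ) : ℤ) : ℝ) := by
    push_cast
    exact h
  exact_mod_cast this

-- counting helper
lemma sum_indVec {n : ℕ} (A B : Finset (Fin n)) :
    ∑ i ∈ B, indVec n A i = ((B ∩ A).card : ℝ) := by
  simp only [indVec]
  rw [Finset.sum_boole, Finset.filter_mem_eq_inter]

lemma sum_single {n : ℕ} (a : Fin n) (B : Finset (Fin n)) :
    ∑ i ∈ B, indVec n {a} i = if a ∈ B then (1:ℝ) else 0 := by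
  simp only [indVec, Finset.mem_singleton]
  rw [Finset.sum_ite_eq' B a (fun _ => (1:ℝ))]

lemma inter_card_lt {n r : ℕ} {B B₁ : Finset (Fin n)} (hB : B.card = r) (hB₁ : B₁.card = r)
    (hne : B ≠ B₁) : (B ∩ B₁).card < r := by
  rcases lt_or_eq_of_le (le_trans (Finset.card_le_card (Finset.inter_subset_left)) hB.le) with h | h
  · exact h
  · exfalso
    have h1 : B ∩ B₁ = B := Finset.eq_of_subset_of_card_le Finset.inter_subset_left (by omega)
    have h2 : B ⊆ B₁ := by rw [← h1]; exact Finset.inter_subset_right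
    exact hne (Finset.eq_of_subset_of_card_le h2 (by omega))

lemma swap_from_pt {n : ℕ} {B₁ Bs : Finset (Fin n)} {b₁ c : Fin n} (hcb : c ≠ b₁)
    (hb₁Bs : b₁ ∉ Bs)
    (hpt : ∀ x : Fin n, (if x ∈ B₁ then (1:ℝ) else 0) - (if x ∈ Bs then 1 else 0)
        = (if x = b₁ then (1:ℝ) else 0) - (if x = c then 1 else 0)) :
    c ∉ B₁ ∧ c ∈ Bs ∧ Bs = insert c (B₁.erase b₁) := by
  have hcB₁ : c ∉ B₁ := by
    intro hh
    have hx := hpt c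
    rw [if_pos hh, if_neg hcb, if_pos rfl] at hx
    by_cases h2 : c ∈ Bs
    · rw [if_pos h2] at hx; norm_num at hx
    · rw [if_neg h2] at hx; norm_num at hx
  have hcBs : c ∈ Bs := by
    by_contra h2
    have hx := hpt c
    rw [if_neg hcB₁, if_neg h2, if_neg hcb, if_pos rfl] at hx
    norm_num at hx
  refine ⟨hcB₁, hcBs, ?_⟩
  ext x
  have hx := hpt x
  rw [Finset.mem_insert, Finset.mem_erase]
  by_cases h1 : x ∈ Bs <;> by_cases h2 : x ∈ B₁ <;> by_cases h3 : x = b₁ <;>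
      by_cases h4 : x = c <;>
    simp only [h1, h2, h3, h4, if_true, if_false, eq_self_iff_true, if_pos, if_neg,
      not_false_iff, not_true] at hx ⊢ <;>
    first
      | tauto
      | norm_num at hx

theorem backward {n r : ℕ} (𝓑 : Finset (Finset (Fin n)))
    (hcard : ∀ B ∈ 𝓑, B.card = r)
    (h : ∀ F : Set (Fin n → ℝ), IsEdge (polytope 𝓑) F →
        ∃ i j : Fin n,
          (affineSpan ℝ F).direction = Submodule.span ℝ {indVec n {i} - indVec n {j}}) :
    IsBases 𝓑 := by
  intro B₁ hB₁ B₂ hB₂ b₁ hb₁m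
  rw [Finset.mem_sdiff] at hb₁m
  obtain ⟨hb₁B₁, hb₁B₂⟩ := hb₁m
  have h𝓑ne : 𝓑.Nonempty := ⟨B₁, hB₁⟩
  have hcard₁ : B₁.card = r := hcard B₁ hB₁
  have hcard₂ : B₂.card = r := hcard B₂ hB₂
  -- Stage 0 functional
  set w₀ : Fin n → ℝ := indVec n (B₁ ∪ B₂) with hw₀
  set φ₀ : Finset (Fin n) → ℝ := fun B => ∑ i ∈ B, w₀ i with hφ₀
  have hφ₀eval : ∀ B, φ₀ B = ((B ∩ (B₁ ∪ B₂)).card : ℝ) := fun B => sum_indVec _ B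
  set 𝓕 : Finset (Finset (Fin n)) := 𝓑.filter (fun B => B ⊆ B₁ ∪ B₂) with h𝓕
  have hB₁𝓕 : B₁ ∈ 𝓕 := Finset.mem_filter.2 ⟨hB₁, Finset.subset_union_left⟩
  have hB₂𝓕 : B₂ ∈ 𝓕 := Finset.mem_filter.2 ⟨hB₂, Finset.subset_union_right⟩
  have hstage0 : amax φ₀ 𝓑 = 𝓕 := by
    ext B
    rw [mem_amax, h𝓕, Finset.mem_filter]
    constructor
    · rintro ⟨hB, hmax⟩
      refine ⟨hB, ?_⟩
      have h1 := hmax B₁ hB₁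
      rw [hφ₀eval, hφ₀eval, Finset.inter_eq_left.2 Finset.subset_union_left, hcard₁] at h1
      have h2 : (B ∩ (B₁ ∪ B₂)).card ≤ B.card :=
        Finset.card_le_card Finset.inter_subset_left
      rw [hcard B hB] at h2
      have h3 : (B ∩ (B₁ ∪ B₂)).card = B.card := by
        rw [hcard B hB]; exact_mod_cast le_antisymm h2 (by exact_mod_cast h1)
      have h4 : B ∩ (B₁ ∪ B₂) = B :=
        Finset.eq_of_subset_of_card_le Finset.inter_subset_left h3.ge
      rw [← h4]
      exact Finset.inter_subset_right
    · rintro ⟨hB, hsub⟩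
      refine ⟨hB, fun C hC => ?_⟩
      rw [hφ₀eval, hφ₀eval, Finset.inter_eq_left.2 hsub, hcard B hB]
      have : (C ∩ (B₁ ∪ B₂)).card ≤ r := by
        rw [← hcard C hC]
        exact Finset.card_le_card Finset.inter_subset_left
      exact_mod_cast this
  -- Stage 1
  set 𝓕₀ : Finset (Finset (Fin n)) := 𝓕.filter (fun B => b₁ ∉ B) with h𝓕₀
  have h𝓕₀ne : 𝓕₀.Nonempty := ⟨B₂, Finset.mem_filter.2 ⟨hB₂𝓕, hb₁B₂⟩⟩
  obtain ⟨Bm, hBm, hBmmax⟩ := Finset.exists_max_image 𝓕₀ (fun B => (B ∩ B₁).card) h𝓕₀ne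
  set M : ℕ := (Bm ∩ B₁).card with hM
  have hBm𝓕 : Bm ∈ 𝓕 := (Finset.mem_filter.1 hBm).1
  have hBm𝓑 : Bm ∈ 𝓑 := (Finset.mem_filter.1 hBm𝓕).1
  have hb₁Bm : b₁ ∉ Bm := (Finset.mem_filter.1 hBm).2
  have hMlt : M < r :=
    inter_card_lt (hcard Bm hBm𝓑) hcard₁ (fun hh => hb₁Bm (hh ▸ hb₁B₁))
  set t₁ : ℝ := (r : ℝ) - M with ht₁
  have ht₁pos : 0 < t₁ := by
    rw [ht₁, sub_pos]
    exact_mod_cast hMlt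
  set w₁ : Fin n → ℝ := indVec n B₁ - t₁ • indVec n {b₁} with hw₁
  set φ₁ : Finset (Fin n) → ℝ := fun B => ∑ i ∈ B, w₁ i with hφ₁
  have hφ₁eval : ∀ B, φ₁ B = ((B ∩ B₁).card : ℝ) - t₁ * (if b₁ ∈ B then 1 else 0) := by
    intro B
    rw [hφ₁]
    simp only [hw₁, Pi.sub_apply, Pi.smul_apply, smul_eq_mul]
    rw [Finset.sum_sub_distrib, sum_indVec, ← Finset.mul_sum, sum_single]
  set A₁ : Finset (Finset (Fin n)) := 𝓕₀.filter (fun B => (B ∩ B₁).card = M) with hA₁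
  have hBmA₁ : Bm ∈ A₁ := Finset.mem_filter.2 ⟨hBm, rfl⟩
  have hA₁sub𝓕 : A₁ ⊆ 𝓕 := fun B hB => (Finset.mem_filter.1 (Finset.mem_filter.1 hB).1).1
  -- value of φ₁ on B₁ and bounds
  have hφ₁B₁ : φ₁ B₁ = (M : ℝ) := by
    rw [hφ₁eval, Finset.inter_self, hcard₁, if_pos hb₁B₁, ht₁]
    ring
  have hφ₁le : ∀ B ∈ 𝓕, φ₁ B ≤ (M : ℝ) := by
    intro B hB
    have hB𝓑 : B ∈ 𝓑 := (Finset.mem_filter.1 hB).1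
    by_cases hb : b₁ ∈ B
    · by_cases hBeq : B = B₁
      · rw [hBeq, hφ₁B₁]
      · have hlt : (B ∩ B₁).card < r := inter_card_lt (hcard B hB𝓑) hcard₁ hBeq
        rw [hφ₁eval, if_pos hb, ht₁]
        have h1 : (B ∩ B₁).card + 1 ≤ r := hlt
        have h1' : ((B ∩ B₁).card : ℝ) + 1 ≤ (r:ℝ) := by exact_mod_cast h1
        have h2 : M + 1 ≤ r := hMlt
        have h2' : (M:ℝ) + 1 ≤ (r:ℝ) := by exact_mod_cast h2
        linarith
    · rw [hφ₁eval, if_neg hb]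
      have hmem : B ∈ 𝓕₀ := Finset.mem_filter.2 ⟨hB, hb⟩
      have := hBmmax B hmem
      simp only [mul_zero, sub_zero]
      exact_mod_cast this
  have hstage1 : amax φ₁ 𝓕 = insert B₁ A₁ := by
    ext B
    rw [mem_amax, Finset.mem_insert]
    constructor
    · rintro ⟨hB, hmax⟩
      have hge : (M : ℝ) ≤ φ₁ B := hφ₁B₁ ▸ hmax B₁ hB₁𝓕
      have heq : φ₁ B = (M : ℝ) := le_antisymm (hφ₁le B hB) hge
      by_cases hb : b₁ ∈ B
      · left
        by_contra hBeq
        have hB𝓑 : B ∈ 𝓑 := (Finset.mem_filter.1 hB).1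
        have hlt : (B ∩ B₁).card < r := inter_card_lt (hcard B hB𝓑) hcard₁ hBeq
        rw [hφ₁eval, if_pos hb, ht₁] at heq
        have h1 : ((B ∩ B₁).card : ℝ) + 1 ≤ (r : ℝ) := by exact_mod_cast hlt
        have h2 : (M : ℝ) + 1 ≤ (r : ℝ) := by exact_mod_cast hMlt
        linarith
      · right
        rw [hφ₁eval, if_neg hb, mul_zero, sub_zero] at heq
        exact Finset.mem_filter.2 ⟨Finset.mem_filter.2 ⟨hB, hb⟩, by exact_mod_cast heq⟩
    · intro hB
      have hBval : φ₁ B = (M : ℝ) ∧ B ∈ 𝓕 := by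
        rcases hB with rfl | hBA
        · exact ⟨hφ₁B₁, hB₁𝓕⟩
        · have h1 := (Finset.mem_filter.1 hBA).2
          have h2 : b₁ ∉ B := (Finset.mem_filter.1 (Finset.mem_filter.1 hBA).1).2
          refine ⟨?_, hA₁sub𝓕 hBA⟩
          rw [hφ₁eval, if_neg h2, mul_zero, sub_zero]
          exact_mod_cast h1
      exact ⟨hBval.2, fun C hC => hBval.1 ▸ hφ₁le C hC⟩
  -- Stage 2
  set p : Fin n → ℝ := fun i => (3:ℝ) ^ (i : ℕ) with hp
  set valp : Finset (Fin n) → ℝ := fun B => ∑ i ∈ B, p i with hvalp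
  have hvalp_inj : ∀ {B C : Finset (Fin n)}, valp B = valp C → B = C :=
    fun hBC => pow3_real_inj hBC
  set q : Finset (Fin n) → ℝ := fun B => valp B - valp B₁ with hq
  have hqne : ∀ B ∈ A₁, q B ≠ 0 := by
    intro B hBA hq0
    have : B = B₁ := hvalp_inj (by rw [hq] at hq0; simp only at hq0; linarith)
    exact (Finset.mem_filter.1 (Finset.mem_filter.1 hBA).1).2 (this ▸ hb₁B₁)
  obtain ⟨s, hs1, hspos⟩ : ∃ s : ℝ, (s = 1 ∨ s = -1) ∧ ∃ B ∈ A₁, 0 < s * q B := by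
    rcases lt_trichotomy (q Bm) 0 with hlt | heq | hgt
    · exact ⟨-1, Or.inr rfl, Bm, hBmA₁, by linarith⟩
    · exact absurd heq (hqne Bm hBmA₁)
    · exact ⟨1, Or.inl rfl, Bm, hBmA₁, by linarith⟩
  obtain ⟨Bs, hBsA₁, hBsmax⟩ := Finset.exists_max_image A₁ (fun B => s * q B) ⟨Bm, hBmA₁⟩
  set m : ℝ := s * q Bs with hm
  have hmpos : 0 < m := by
    obtain ⟨B, hBA, hBpos⟩ := hspos
    exact lt_of_lt_of_le hBpos (hBsmax B hBA)
  set t₂ : ℝ := t₁ / m with ht₂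
  have ht₂pos : 0 < t₂ := div_pos ht₁pos hmpos
  set w₂ : Fin n → ℝ := indVec n B₁ + t₂ • (s • p) with hw₂
  set φ₂ : Finset (Fin n) → ℝ := fun B => ∑ i ∈ B, w₂ i with hφ₂
  have hφ₂eval : ∀ B, φ₂ B = ((B ∩ B₁).card : ℝ) + t₂ * (s * valp B) := by
    intro B
    rw [hφ₂]
    simp only [hw₂, Pi.add_apply, Pi.smul_apply, smul_eq_mul]
    rw [Finset.sum_add_distrib, sum_indVec, ← Finset.mul_sum, ← Finset.mul_sum]
  -- key comparison on insert B₁ A₁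
  have hdiff : ∀ B ∈ A₁, φ₂ B₁ - φ₂ B = t₁ - t₂ * (s * q B) := by
    intro B hBA
    have hBcard : (B ∩ B₁).card = M := (Finset.mem_filter.1 hBA).2
    rw [hφ₂eval, hφ₂eval, Finset.inter_self, hcard₁, hBcard, hq]
    simp only
    rw [ht₁]
    ring
  have hφ₂le : ∀ B ∈ insert B₁ A₁, φ₂ B ≤ φ₂ B₁ := by
    intro B hB
    rcases Finset.mem_insert.1 hB with rfl | hBA
    · exact le_refl _
    · have := hdiff B hBA
      have h2 : t₂ * (s * q B) ≤ t₂ * m := by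
        apply mul_le_mul_of_nonneg_left (hBsmax B hBA) ht₂pos.le
      have h3 : t₂ * m = t₁ := by
        rw [ht₂]; field_simp
      linarith
  have hstage2 : amax φ₂ (insert B₁ A₁) = insert B₁ {Bs} := by
    ext B
    constructor
    · intro hBmem
      obtain ⟨hB, hmax⟩ := mem_amax.1 hBmem
      rw [Finset.mem_insert, Finset.mem_singleton]
      rcases Finset.mem_insert.1 hB with rfl | hBA
      · exact Or.inl rfl
      · right
        have hge : φ₂ B₁ ≤ φ₂ B := hmax B₁ (Finset.mem_insert_self _ _)
        have hle := hφ₂le B hB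
        have heq : φ₂ B₁ - φ₂ B = 0 := by linarith
        rw [hdiff B hBA] at heq
        have hqB : s * q B = m := by
          have h3 : t₂ * m = t₁ := by rw [ht₂]; field_simp
          have h4 : t₂ * (s * q B) = t₂ * m := by linarith
          exact mul_left_cancel₀ (ne_of_gt ht₂pos) h4
        have : valp B = valp Bs := by
          rcases hs1 with rfl | rfl
          · rw [hm, hq] at hqB; simp only at hqB; linarith
          · rw [hm, hq] at hqB; simp only at hqB; linarith
        exact hvalp_inj this
    · intro hB
      rw [Finset.mem_insert, Finset.mem_singleton] at hB
      have hBsval : φ₂ B₁ - φ₂ Bs = 0 := by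
        rw [hdiff Bs hBsA₁, ← hm, ht₂]
        field_simp
        ring
      rcases hB with rfl | rfl
      · exact mem_amax.2 ⟨Finset.mem_insert_self _ _, hφ₂le⟩
      · refine mem_amax.2 ⟨Finset.mem_insert_of_mem hBsA₁, fun C hC => ?_⟩
        have := hφ₂le C hC
        linarith
  -- combine functionals
  obtain ⟨N₁, hN₁pos, hc₁⟩ := amax_combine 𝓑 h𝓑ne φ₀ φ₁
  rw [hstage0, hstage1] at hc₁
  obtain ⟨N₂, hN₂pos, hc₂⟩ := amax_combine 𝓑 h𝓑ne (fun B => N₁ * φ₀ B + φ₁ B) φ₂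
  rw [hc₁, hstage2] at hc₂
  set w : Fin n → ℝ := N₂ • (N₁ • w₀ + w₁) + w₂ with hw
  have hwval : ∀ B : Finset (Fin n),
      (lw w) (indVec n B) = N₂ * (N₁ * φ₀ B + φ₁ B) + φ₂ B := by
    intro B
    rw [lw_indVec]
    simp only [hw, Pi.add_apply, Pi.smul_apply, smul_eq_mul, hφ₀, hφ₁, hφ₂]
    rw [Finset.sum_add_distrib, ← Finset.mul_sum, Finset.sum_add_distrib, ← Finset.mul_sum]
  have hargmax : amax (fun B => lw w (indVec n B)) 𝓑 = insert B₁ {Bs} := by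
    have heq : (fun B => lw w (indVec n B))
        = (fun B => N₂ * (N₁ * φ₀ B + φ₁ B) + φ₂ B) := funext hwval
    rw [heq, hc₂]
  set F : Set (Fin n → ℝ) :=
    convexHull ℝ (indVec n '' ↑(insert B₁ ({Bs} : Finset (Finset (Fin n))))) with hF
  have hfaceF : {x ∈ polytope 𝓑 | ∀ y ∈ polytope 𝓑, (lw w) y ≤ (lw w) x} = F := by
    rw [face_eq 𝓑 h𝓑ne (lw w), hargmax]
  have hexp : IsExposed ℝ (polytope 𝓑) F := fun _ => ⟨lw w, hfaceF.symm⟩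
  have hb₁Bs : b₁ ∉ Bs := (Finset.mem_filter.1 (Finset.mem_filter.1 hBsA₁).1).2
  have hBsne : Bs ≠ B₁ := fun hh => hb₁Bs (by rw [hh]; exact hb₁B₁)
  have hBs𝓑 : Bs ∈ 𝓑 := (Finset.mem_filter.1 (hA₁sub𝓕 hBsA₁)).1
  have hBssub : Bs ⊆ B₁ ∪ B₂ := (Finset.mem_filter.1 (hA₁sub𝓕 hBsA₁)).2
  have himg : indVec n '' ↑(insert B₁ ({Bs} : Finset (Finset (Fin n))))
      = {indVec n B₁, indVec n Bs} := by
    rw [Finset.coe_insert, Finset.coe_singleton, Set.image_insert_eq, Set.image_singleton]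
  set d : Fin n → ℝ := indVec n B₁ - indVec n Bs with hd
  have hdne : d ≠ 0 := by
    intro hh
    rw [hd, sub_eq_zero] at hh
    exact hBsne (indVec_inj hh.symm)
  have hdirF : (affineSpan ℝ F).direction = Submodule.span ℝ {d} := by
    rw [hF, affineSpan_convexHull, himg, direction_affineSpan, vectorSpan_pair, vsub_eq_sub, hd]
  have hdim : polyDim F = 1 := by
    rw [polyDim, hdirF, finrank_span_singleton hdne]
  obtain ⟨i, j, hij⟩ := h F ⟨hexp, hdim⟩
  rw [hdirF] at hij
  have hdmem : d ∈ Submodule.span ℝ {indVec n {i} - indVec n {j}} := by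
    rw [← hij]
    exact Submodule.mem_span_singleton_self d
  obtain ⟨μ, hμeq⟩ := Submodule.mem_span_singleton.1 hdmem
  have hpt : ∀ x : Fin n, (if x ∈ B₁ then (1:ℝ) else 0) - (if x ∈ Bs then 1 else 0)
      = μ * ((if x = i then (1:ℝ) else 0) - (if x = j then 1 else 0)) := by
    intro x
    have := congrFun hμeq x
    simp only [Pi.smul_apply, Pi.sub_apply, smul_eq_mul, hd, indVec,
      Finset.mem_singleton] at this
    linarith
  have hb1pt := hpt b₁
  rw [if_pos hb₁B₁, if_neg hb₁Bs] at hb1pt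
  obtain ⟨c, hcb, hptc⟩ : ∃ c : Fin n, c ≠ b₁ ∧ ∀ x : Fin n,
      (if x ∈ B₁ then (1:ℝ) else 0) - (if x ∈ Bs then 1 else 0)
        = (if x = b₁ then (1:ℝ) else 0) - (if x = c then 1 else 0) := by
    by_cases hbi : b₁ = i <;> by_cases hbj : b₁ = j
    · exfalso
      rw [if_pos hbi, if_pos hbj] at hb1pt
      norm_num at hb1pt
    · rw [if_pos hbi, if_neg hbj] at hb1pt
      have hμ1 : μ = 1 := by linarith
      refine ⟨j, fun hh => hbj hh.symm, fun x => ?_⟩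
      rw [hpt x, hμ1, ← hbi]
      ring
    · rw [if_neg hbi, if_pos hbj] at hb1pt
      have hμ1 : μ = -1 := by linarith
      refine ⟨i, fun hh => hbi hh.symm, fun x => ?_⟩
      rw [hpt x, hμ1, ← hbj]
      ring
    · exfalso
      rw [if_neg hbi, if_neg hbj] at hb1pt
      norm_num at hb1pt
  obtain ⟨hcB₁, hcBs, hBseq⟩ := swap_from_pt hcb hb₁Bs hptc
  have hcB₂ : c ∈ B₂ := by
    rcases Finset.mem_union.1 (hBssub hcBs) with h2 | h2
    · exact absurd h2 hcB₁
    · exact h2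
  exact ⟨c, Finset.mem_sdiff.2 ⟨hcB₂, hcB₁⟩, by rw [← hBseq]; exact hBs𝓑⟩

/-- **Theorem (Gelfand–Serganova).** A collection `𝓑` of `r`-element subsets of `[n]`
is the collection of bases of a matroid iff every edge of `Q(𝓑)` is a parallel
translate of `e_i - e_j` for some `i, j ∈ [n]`. -/
theorem statement_0 (n r : ℕ) (𝓑 : Finset (Finset (Fin n)))
    (hcard : ∀ B ∈ 𝓑, B.card = r) :
    IsBases 𝓑 ↔
      ∀ F : Set (Fin n → ℝ), IsEdge (polytope 𝓑) F →
        ∃ i j : Fin n,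
          (affineSpan ℝ F).direction = Submodule.span ℝ {indVec n {i} - indVec n {j}} := by
  constructor
  · intro hB
    exact forward 𝓑 hcard hB
  · intro h
    exact backward 𝓑 hcard h
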